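/- Let V be a finite atomistic lattice such that T(0, a₁) = T(0, a₂) for all atoms a₁, a₂ of V, and such that T(0,1) being contained in a tolerance T implies T = V × V. Then V is tolerance simple, i.e., its only tolerances are the diagonal and V × V. -/

import Mathlib

/-- A tolerance of a lattice: a reflexive symmetric binary relation compatible
with meet and join. -/
def IsTolerance {V : Type*} [Lattice V] (T : V → V → Prop) : Prop :=
  Reflexive T ∧ Symmetric T ∧
    (∀ x y u v : V, T x y → T u v → T (x ⊓ u) (y ⊓ v)) ∧
    (∀ x y u v : V, T x y → T u v → T (x ⊔ u) (y ⊔ v))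

/-- The least tolerance containing the pair `(x,y)`. -/
def TolGen {V : Type*} [Lattice V] (x y : V) : V → V → Prop :=
  fun u v => ∀ T : V → V → Prop, IsTolerance T → T x y → T u v

/-- A finite lattice is atomistic if every element is a (finite) join of atoms. -/
def Atomistic (V : Type*) [Lattice V] [OrderBot V] : Prop :=
  ∀ v : V, ∃ s : Finset V, (∀ a ∈ s, IsAtom a) ∧ v = s.sup id

theorem tolerance_simple_of_tolgen_atoms_eq
    {V : Type*} [Lattice V] [Fintype V] [BoundedOrder V]
    (hatomistic : Atomistic V)
    (hatoms : ∀ a₁ a₂ : V, IsAtom a₁ → IsAtom a₂ →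
      TolGen (⊥ : V) a₁ = TolGen (⊥ : V) a₂)
    (hfull : ∀ T : V → V → Prop, IsTolerance T → T ⊥ ⊤ → ∀ x y : V, T x y) :
    ∀ T : V → V → Prop, IsTolerance T →
      (T = fun x y => x = y) ∨ (∀ x y : V, T x y) := by

  classical
  intro T hT
  by_cases h : ∀ x y : V, T x y → x = y
  · left
    funext x y
    apply propext
    exact ⟨h x y, fun e => e ▸ hT.1 x⟩
  · right
    push_neg at h
    obtain ⟨x, y, hxy, hne⟩ := h
    obtain ⟨hrefl, hsymm, hmeet, hjoin⟩ := hT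
    have hmx : T (x ⊓ y) x := by
      have := hmeet y x x x (hsymm hxy) (hrefl x)
      simpa [inf_comm] using this
    have hmy : T (x ⊓ y) y := by
      have := hmeet x y y y hxy (hrefl y)
      simpa using this
    have hmj : T (x ⊓ y) (x ⊔ y) := by
      have := hjoin _ _ _ _ hmx hmy
      simpa using this
    have hlt : x ⊓ y < x ⊔ y := inf_lt_sup.mpr hne
    obtain ⟨s, hs, hsup⟩ := hatomistic (x ⊔ y)
    have hex : ∃ a ∈ s, ¬ a ≤ x ⊓ y := by
      by_contra hc
      push_neg at hc
      have : x ⊔ y ≤ x ⊓ y := hsup ▸ Finset.sup_le hc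
      exact hlt.not_ge this
    obtain ⟨a, has, hnle⟩ := hex
    have ha : IsAtom a := hs a has
    have haj : a ≤ x ⊔ y := hsup ▸ Finset.le_sup (f := id) has
    have hainf : a ⊓ (x ⊓ y) = ⊥ := by
      apply ha.2
      exact lt_of_le_of_ne inf_le_left (fun e => hnle (inf_eq_left.mp e))
    have hba : T ⊥ a := by
      have := hmeet (x ⊓ y) (x ⊔ y) a a hmj (hrefl a)
      rwa [inf_comm (x ⊓ y) a, hainf, inf_eq_right.mpr haj] at this
    have hTtol : IsTolerance T := ⟨hrefl, hsymm, hmeet, hjoin⟩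
    have hball : ∀ b : V, IsAtom b → T ⊥ b := by
      intro b hb
      have hgen : TolGen (⊥ : V) a ⊥ b := by
        rw [hatoms a b ha hb]
        exact fun T' _ h' => h'
      exact hgen T hTtol hba
    obtain ⟨t, ht, htop⟩ := hatomistic (⊤ : V)
    have key : ∀ u : Finset V, (∀ b ∈ u, IsAtom b) → T ⊥ (u.sup id) := by
      intro u
      induction u using Finset.induction_on with
      | empty => intro _; simpa using hrefl ⊥
      | insert b u' hni ih =>
        intro hu
        have h1 : T ⊥ b := hball b (hu b (Finset.mem_insert_self b u'))
        have h2 : T ⊥ (u'.sup id) := ih (fun c hc => hu c (Finset.mem_insert_of_mem hc))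
        have := hjoin _ _ _ _ h1 h2
        simpa [Finset.sup_insert] using this
    have : T ⊥ ⊤ := htop ▸ key t ht
    exact hfull T hTtol this
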